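/- arXiv:2005.09490 — 4 statements merged into one kernel-verified Lean document; each statement's English description precedes it below -/
import Mathlib

section
/- Let n ≥ 2 and let M_n ⊆ ℕ^{2n} be the submonoid of all tuples (a_1,…,a_{2n}) of nonnegative integers satisfying Σ_{j=1}^{n} (n+1−j)·a_{2j−1} = Σ_{j=1}^{n} j·a_{2j}. Then M_n is not a free commutative monoid; i.e., there is no subset of M_n that freely generates M_n. -/
def sigHom (m : ℕ) : (Fin m → ℕ) →+ ℕ where
  toFun a := ∑ i, a i
  map_zero' := by simp
  map_add' a b := by simp [Finset.sum_add_distrib]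

def E (n k : ℕ) (h : k < 2 * n) : Fin (2 * n) → ℕ := Pi.single ⟨k, h⟩ 1

lemma sig_E (n k : ℕ) (h : k < 2 * n) : sigHom (2 * n) (E n k h) = 1 := by
  simp [sigHom, E, Pi.single_apply]

lemma sum_mul_E {n : ℕ} (w g : Fin n → ℕ) (hg : ∀ j, g j < 2 * n) (k : ℕ)
    (hk : k < 2 * n) (v : ℕ) (hv : v < n) (hiff : ∀ j : Fin n, g j = k ↔ (j : ℕ) = v) :
    (∑ j : Fin n, w j * E n k hk ⟨g j, hg j⟩) = w ⟨v, hv⟩ := by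
  rw [Finset.sum_eq_single ⟨v, hv⟩]
  · have h0 : g ⟨v, hv⟩ = k := (hiff ⟨v, hv⟩).2 rfl
    simp [E, Pi.single_apply, Fin.ext_iff, h0]
  · intro b _ hb
    have : g b ≠ k := fun h => hb (Fin.ext ((hiff b).1 h))
    simp [E, Pi.single_apply, Fin.ext_iff, this]
  · simp

lemma sum_mul_E_zero {n : ℕ} (w g : Fin n → ℕ) (hg : ∀ j, g j < 2 * n) (k : ℕ)
    (hk : k < 2 * n) (hne : ∀ j, g j ≠ k) :
    (∑ j : Fin n, w j * E n k hk ⟨g j, hg j⟩) = 0 :=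
  Finset.sum_eq_zero fun j _ => by simp [E, Pi.single_apply, Fin.ext_iff, hne j]

set_option maxHeartbeats 1600000 in
/-- The weight monoid of `SL(2n+1)/(Sp(2n)×ℂ^×)` in fundamental-weight
coordinates is not a freely generated commutative monoid for `n ≥ 2`. -/
theorem stmt_0 (n : ℕ) (hn : 2 ≤ n)
    (M : AddSubmonoid (Fin (2 * n) → ℕ))
    (hM : ∀ a : Fin (2 * n) → ℕ, a ∈ M ↔
      ∑ j : Fin n, (n - (j : ℕ)) * a ⟨2 * (j : ℕ), by have := j.isLt; omega⟩ =
      ∑ j : Fin n, ((j : ℕ) + 1) * a ⟨2 * (j : ℕ) + 1, by have := j.isLt; omega⟩) :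
    ¬ ∃ S : Set (Fin (2 * n) → ℕ), S ⊆ (M : Set (Fin (2 * n) → ℕ)) ∧
      ∀ x ∈ M, ∃! c : S →₀ ℕ,
        (c.sum fun s k => k • (s : Fin (2 * n) → ℕ)) = x := by
  rintro ⟨S, hSM, hfree⟩
  have p0 : (0:ℕ) < 2*n := by omega
  have p1 : (1:ℕ) < 2*n := by omega
  have p2 : (2:ℕ) < 2*n := by omega
  have p3 : 2*n-3 < 2*n := by omega
  have p4 : 2*n-2 < 2*n := by omega
  have p5 : 2*n-1 < 2*n := by omega
  -- the five elements
  set t1 : Fin (2*n) → ℕ := E n 0 p0 + E n 1 p1 + E n (2*n-3) p3 with ht1def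
  set t2 : Fin (2*n) → ℕ := E n 2 p2 + E n (2*n-2) p4 + E n (2*n-1) p5 with ht2def
  set q0 : Fin (2*n) → ℕ := E n 0 p0 + E n (2*n-1) p5 with hq0def
  set q1 : Fin (2*n) → ℕ := E n 2 p2 + E n (2*n-3) p3 with hq1def
  set q2 : Fin (2*n) → ℕ := E n 1 p1 + E n (2*n-2) p4 with hq2def
  have ht1M : t1 ∈ M := by
    rw [hM, ht1def]
    simp only [Pi.add_apply, mul_add, Finset.sum_add_distrib]
    rw [sum_mul_E (fun j => n - (j:ℕ)) (fun j => 2*(j:ℕ))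
          (fun j => by beta_reduce; have := j.isLt; omega) 0 p0
          0 (by omega) (fun j => by beta_reduce; omega),
        sum_mul_E_zero (fun j => n - (j:ℕ)) (fun j => 2*(j:ℕ))
          (fun j => by beta_reduce; have := j.isLt; omega) 1 p1
          (fun j => by beta_reduce; omega),
        sum_mul_E_zero (fun j => n - (j:ℕ)) (fun j => 2*(j:ℕ))
          (fun j => by beta_reduce; have := j.isLt; omega) (2*n-3) p3
          (fun j => by beta_reduce; have := j.isLt; omega),
        sum_mul_E_zero (fun j => (j:ℕ)+1) (fun j => 2*(j:ℕ)+1)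
          (fun j => by beta_reduce; have := j.isLt; omega) 0 p0
          (fun j => by beta_reduce; omega),
        sum_mul_E (fun j => (j:ℕ)+1) (fun j => 2*(j:ℕ)+1)
          (fun j => by beta_reduce; have := j.isLt; omega) 1 p1
          0 (by omega) (fun j => by beta_reduce; omega),
        sum_mul_E (fun j => (j:ℕ)+1) (fun j => 2*(j:ℕ)+1)
          (fun j => by beta_reduce; have := j.isLt; omega) (2*n-3) p3
          (n-2) (by omega) (fun j => by beta_reduce; have := j.isLt; omega)]
    simp
    omega
  have ht2M : t2 ∈ M := by
    rw [hM, ht2def]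
    simp only [Pi.add_apply, mul_add, Finset.sum_add_distrib]
    rw [
        sum_mul_E (fun j => n - (j:ℕ)) (fun j => 2*(j:ℕ)) (fun j => by beta_reduce; have := j.isLt; omega) (2) p2 (1) (by omega) (fun j => by beta_reduce; have := j.isLt; omega),
        sum_mul_E (fun j => n - (j:ℕ)) (fun j => 2*(j:ℕ)) (fun j => by beta_reduce; have := j.isLt; omega) (2*n-2) p4 (n-1) (by omega) (fun j => by beta_reduce; have := j.isLt; omega),
        sum_mul_E_zero (fun j => n - (j:ℕ)) (fun j => 2*(j:ℕ)) (fun j => by beta_reduce; have := j.isLt; omega) (2*n-1) p5 (fun j => by beta_reduce; have := j.isLt; omega),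
        sum_mul_E_zero (fun j => (j:ℕ)+1) (fun j => 2*(j:ℕ)+1) (fun j => by beta_reduce; have := j.isLt; omega) (2) p2 (fun j => by beta_reduce; have := j.isLt; omega),
        sum_mul_E_zero (fun j => (j:ℕ)+1) (fun j => 2*(j:ℕ)+1) (fun j => by beta_reduce; have := j.isLt; omega) (2*n-2) p4 (fun j => by beta_reduce; have := j.isLt; omega),
        sum_mul_E (fun j => (j:ℕ)+1) (fun j => 2*(j:ℕ)+1) (fun j => by beta_reduce; have := j.isLt; omega) (2*n-1) p5 (n-1) (by omega) (fun j => by beta_reduce; have := j.isLt; omega)]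
    simp
    omega
  have hq0M : q0 ∈ M := by
    rw [hM, hq0def]
    simp only [Pi.add_apply, mul_add, Finset.sum_add_distrib]
    rw [
        sum_mul_E (fun j => n - (j:ℕ)) (fun j => 2*(j:ℕ)) (fun j => by beta_reduce; have := j.isLt; omega) (0) p0 (0) (by omega) (fun j => by beta_reduce; have := j.isLt; omega),
        sum_mul_E_zero (fun j => n - (j:ℕ)) (fun j => 2*(j:ℕ)) (fun j => by beta_reduce; have := j.isLt; omega) (2*n-1) p5 (fun j => by beta_reduce; have := j.isLt; omega),
        sum_mul_E_zero (fun j => (j:ℕ)+1) (fun j => 2*(j:ℕ)+1) (fun j => by beta_reduce; have := j.isLt; omega) (0) p0 (fun j => by beta_reduce; have := j.isLt; omega),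
        sum_mul_E (fun j => (j:ℕ)+1) (fun j => 2*(j:ℕ)+1) (fun j => by beta_reduce; have := j.isLt; omega) (2*n-1) p5 (n-1) (by omega) (fun j => by beta_reduce; have := j.isLt; omega)]
    simp
    omega
  have hq1M : q1 ∈ M := by
    rw [hM, hq1def]
    simp only [Pi.add_apply, mul_add, Finset.sum_add_distrib]
    rw [
        sum_mul_E (fun j => n - (j:ℕ)) (fun j => 2*(j:ℕ)) (fun j => by beta_reduce; have := j.isLt; omega) (2) p2 (1) (by omega) (fun j => by beta_reduce; have := j.isLt; omega),
        sum_mul_E_zero (fun j => n - (j:ℕ)) (fun j => 2*(j:ℕ)) (fun j => by beta_reduce; have := j.isLt; omega) (2*n-3) p3 (fun j => by beta_reduce; have := j.isLt; omega),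
        sum_mul_E_zero (fun j => (j:ℕ)+1) (fun j => 2*(j:ℕ)+1) (fun j => by beta_reduce; have := j.isLt; omega) (2) p2 (fun j => by beta_reduce; have := j.isLt; omega),
        sum_mul_E (fun j => (j:ℕ)+1) (fun j => 2*(j:ℕ)+1) (fun j => by beta_reduce; have := j.isLt; omega) (2*n-3) p3 (n-2) (by omega) (fun j => by beta_reduce; have := j.isLt; omega)]
    simp
    omega
  have hq2M : q2 ∈ M := by
    rw [hM, hq2def]
    simp only [Pi.add_apply, mul_add, Finset.sum_add_distrib]
    rw [
        sum_mul_E_zero (fun j => n - (j:ℕ)) (fun j => 2*(j:ℕ)) (fun j => by beta_reduce; have := j.isLt; omega) (1) p1 (fun j => by beta_reduce; have := j.isLt; omega),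
        sum_mul_E (fun j => n - (j:ℕ)) (fun j => 2*(j:ℕ)) (fun j => by beta_reduce; have := j.isLt; omega) (2*n-2) p4 (n-1) (by omega) (fun j => by beta_reduce; have := j.isLt; omega),
        sum_mul_E (fun j => (j:ℕ)+1) (fun j => 2*(j:ℕ)+1) (fun j => by beta_reduce; have := j.isLt; omega) (1) p1 (0) (by omega) (fun j => by beta_reduce; have := j.isLt; omega),
        sum_mul_E_zero (fun j => (j:ℕ)+1) (fun j => 2*(j:ℕ)+1) (fun j => by beta_reduce; have := j.isLt; omega) (2*n-2) p4 (fun j => by beta_reduce; have := j.isLt; omega)]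
    simp
    omega
  -- sig values
  have sigHom_apply : ∀ a : Fin (2*n) → ℕ, sigHom (2*n) a = ∑ i, a i := fun a => rfl
  have st1 : sigHom (2*n) t1 = 3 := by rw [ht1def, map_add, map_add, sig_E, sig_E, sig_E]
  have st2 : sigHom (2*n) t2 = 3 := by rw [ht2def, map_add, map_add, sig_E, sig_E, sig_E]
  have sq0 : sigHom (2*n) q0 = 2 := by rw [hq0def, map_add, sig_E, sig_E]
  have sq1 : sigHom (2*n) q1 = 2 := by rw [hq1def, map_add, sig_E, sig_E]
  have sq2 : sigHom (2*n) q2 = 2 := by rw [hq2def, map_add, sig_E, sig_E]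
  -- every nonzero element of M has sig at least 2
  have hA : ∀ a, a ∈ M → a ≠ 0 → 2 ≤ sigHom (2*n) a := by
    intro a haM ha0
    have key := (hM a).1 haM
    by_cases h1 : ∀ j : Fin n, a ⟨2*(j:ℕ), by have := j.isLt; omega⟩ = 0
    · exfalso
      have hL : ∑ j : Fin n, (n - (j:ℕ)) * a ⟨2*(j:ℕ), by have := j.isLt; omega⟩ = 0 :=
        Finset.sum_eq_zero fun j _ => by rw [h1 j, mul_zero]
      rw [hL] at key
      have h2 : ∀ j : Fin n, a ⟨2*(j:ℕ)+1, by have := j.isLt; omega⟩ = 0 := by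
        intro j
        have h3 := Finset.sum_eq_zero_iff.mp key.symm j (Finset.mem_univ j)
        rcases Nat.mul_eq_zero.mp h3 with h | h
        · omega
        · exact h
      apply ha0
      funext i
      rcases Nat.even_or_odd (i:ℕ) with ⟨m, hm⟩ | ⟨m, hm⟩
      · have hmn : m < n := by have := i.isLt; omega
        have hi : i = ⟨2*((⟨m, hmn⟩ : Fin n) : ℕ), by omega⟩ := Fin.ext (by simp; omega)
        rw [hi]; exact h1 ⟨m, hmn⟩
      · have hmn : m < n := by have := i.isLt; omega
        have hi : i = ⟨2*((⟨m, hmn⟩ : Fin n) : ℕ)+1, by omega⟩ := Fin.ext (by simp; omega)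
        rw [hi]; exact h2 ⟨m, hmn⟩
    · push_neg at h1
      obtain ⟨j1, hj1⟩ := h1
      have hL1 : 1 ≤ ∑ j : Fin n, (n - (j:ℕ)) * a ⟨2*(j:ℕ), by have := j.isLt; omega⟩ := by
        refine le_trans ?_ (Finset.single_le_sum (f := fun j : Fin n =>
          (n - (j:ℕ)) * a ⟨2*(j:ℕ), by have := j.isLt; omega⟩) (fun _ _ => Nat.zero_le _)
          (Finset.mem_univ j1))
        have : 1 ≤ n - (j1:ℕ) := by have := j1.isLt; omega
        have ha1 : 1 ≤ a ⟨2*(j1:ℕ), by have := j1.isLt; omega⟩ := Nat.one_le_iff_ne_zero.2 hj1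
        calc 1 = 1 * 1 := by ring
        _ ≤ _ := Nat.mul_le_mul this ha1
      rw [key] at hL1
      have h2 : ∃ j : Fin n, a ⟨2*(j:ℕ)+1, by have := j.isLt; omega⟩ ≠ 0 := by
        by_contra hno
        push_neg at hno
        have : ∑ j : Fin n, ((j:ℕ)+1) * a ⟨2*(j:ℕ)+1, by have := j.isLt; omega⟩ = 0 :=
          Finset.sum_eq_zero fun j _ => by rw [hno j, mul_zero]
        omega
      obtain ⟨j2, hj2⟩ := h2
      have hne : (⟨2*(j1:ℕ), by have := j1.isLt; omega⟩ : Fin (2*n)) ≠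
          ⟨2*(j2:ℕ)+1, by have := j2.isLt; omega⟩ := by
        intro h
        simp only [Fin.mk.injEq] at h
        omega
      have hle : a ⟨2*(j1:ℕ), by have := j1.isLt; omega⟩ +
          a ⟨2*(j2:ℕ)+1, by have := j2.isLt; omega⟩ ≤ ∑ i, a i := by
        rw [← Finset.sum_pair hne]
        exact Finset.sum_le_sum_of_subset (Finset.subset_univ _)
      rw [sigHom_apply]
      omega
  -- zero is not a generator
  have h0S : (0 : Fin (2*n) → ℕ) ∉ S := by
    intro h0
    obtain ⟨c, hc, hu⟩ := hfree 0 (zero_mem M)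
    have e1 := hu 0 (by exact Finsupp.sum_zero_index)
    have e2 := hu (Finsupp.single (⟨0, h0⟩ : S) 1)
      (by show ((Finsupp.single (⟨0, h0⟩ : S) 1).sum fun s k => k • (s : Fin (2*n) → ℕ)) = 0
          rw [Finsupp.sum_single_index (h := fun (s : S) (k : ℕ) => k • (s : Fin (2*n) → ℕ)) (zero_smul ℕ _), one_smul])
    have := e2.trans e1.symm
    simpa using this
  have hS2 : ∀ s : S, 2 ≤ sigHom (2*n) (s : Fin (2*n) → ℕ) := by
    intro s
    refine hA s (hSM s.2) ?_
    intro h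
    exact h0S (h ▸ s.2)
  -- representation lemma
  have key : ∀ x, ∀ hx : x ∈ M, 2 ≤ sigHom (2*n) x → sigHom (2*n) x ≤ 3 →
      ∃ hxS : x ∈ S, ∀ c : S →₀ ℕ, (c.sum fun s k => k • (s : Fin (2*n) → ℕ)) = x →
        c = Finsupp.single ⟨x, hxS⟩ 1 := by
    intro x hx h2 h3
    obtain ⟨c, hc, hu⟩ := hfree x hx
    have hsig : (∑ s ∈ c.support, c s * sigHom (2*n) (s : Fin (2*n) → ℕ)) = sigHom (2*n) x := by
      rw [← hc, Finsupp.sum, map_sum]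
      exact Finset.sum_congr rfl fun s _ => by rw [map_nsmul, smul_eq_mul]
    have hterm : ∀ s ∈ c.support, 2 ≤ c s * sigHom (2*n) (s : Fin (2*n) → ℕ) := by
      intro s hs
      calc 2 = 1 * 2 := by ring
      _ ≤ _ := Nat.mul_le_mul (Nat.one_le_iff_ne_zero.2 (Finsupp.mem_support_iff.1 hs)) (hS2 s)
    have hcard : c.support.card = 1 := by
      rcases Finset.eq_empty_or_nonempty c.support with he | hne
      · exfalso; rw [he, Finset.sum_empty] at hsig; omega
      · by_contra hcard1
        have hlt : 1 < c.support.card := by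
          have := Finset.card_pos.mpr hne; omega
        obtain ⟨s1, hs1, s2, hs2, hne12⟩ := Finset.one_lt_card.mp hlt
        have hsub : ({s1, s2} : Finset S) ⊆ c.support :=
          Finset.insert_subset hs1 (Finset.singleton_subset_iff.mpr hs2)
        have hle : c s1 * sigHom (2*n) (s1 : Fin (2*n) → ℕ) +
            c s2 * sigHom (2*n) (s2 : Fin (2*n) → ℕ) ≤
            ∑ s ∈ c.support, c s * sigHom (2*n) (s : Fin (2*n) → ℕ) := by
          rw [← Finset.sum_pair (f := fun s : S => c s * sigHom (2*n) (s : Fin (2*n) → ℕ)) hne12]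
          exact Finset.sum_le_sum_of_subset hsub
        have ht1' := hterm s1 hs1
        have ht2' := hterm s2 hs2
        omega
    obtain ⟨s0, hs0⟩ := Finset.card_eq_one.mp hcard
    have hcs : c = Finsupp.single s0 (c s0) := (Finsupp.support_eq_singleton.mp hs0).2
    have hx0 : (c s0) • (s0 : Fin (2*n) → ℕ) = x := by
      rw [hcs] at hc
      rwa [Finsupp.sum_single_index (h := fun (s : S) (k : ℕ) => k • (s : Fin (2*n) → ℕ)) (zero_smul ℕ _)] at hc
    have hσ : c s0 * sigHom (2*n) (s0 : Fin (2*n) → ℕ) = sigHom (2*n) x := by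
      rw [← hx0, map_nsmul, smul_eq_mul]
    have hs2' := hS2 s0
    have hcs1 : c s0 = 1 := by
      by_contra hne1
      have hc0 : c s0 ≠ 0 := (Finsupp.support_eq_singleton.mp hs0).1
      have : 2 ≤ c s0 := by omega
      have := Nat.mul_le_mul this hs2'
      omega
    have hxs0 : x = (s0 : Fin (2*n) → ℕ) := by rw [← hx0, hcs1, one_smul]
    refine ⟨hxs0 ▸ s0.2, ?_⟩
    intro c' hc'
    rw [hu c' hc', hcs, hcs1]
    congr 1
    exact Subtype.ext hxs0.symm
  -- apply the lemma to the five elements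
  obtain ⟨ht1S, hu1⟩ := key t1 ht1M (by omega) (by omega)
  obtain ⟨ht2S, hu2⟩ := key t2 ht2M (by omega) (by omega)
  obtain ⟨hq0S, hv0⟩ := key q0 hq0M (by omega) (by omega)
  obtain ⟨hq1S, hv1⟩ := key q1 hq1M (by omega) (by omega)
  obtain ⟨hq2S, hv2⟩ := key q2 hq2M (by omega) (by omega)
  -- two distinct representations of t1 + t2
  obtain ⟨cq, hcq, huq⟩ := hfree (t1 + t2) (M.add_mem ht1M ht2M)
  have hrA : ((Finsupp.single (⟨t1, ht1S⟩ : S) 1 + Finsupp.single (⟨t2, ht2S⟩ : S) 1).sum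
      fun s k => k • (s : Fin (2*n) → ℕ)) = t1 + t2 := by
    rw [Finsupp.sum_add_index' (h := fun (s : S) (k : ℕ) => k • (s : Fin (2*n) → ℕ)) (fun s => zero_smul ℕ _) (fun s k1 k2 => add_smul k1 k2 _),
      Finsupp.sum_single_index (h := fun (s : S) (k : ℕ) => k • (s : Fin (2*n) → ℕ)) (zero_smul ℕ _), Finsupp.sum_single_index (h := fun (s : S) (k : ℕ) => k • (s : Fin (2*n) → ℕ)) (zero_smul ℕ _),
      one_smul, one_smul]
  have hrB : ((Finsupp.single (⟨q0, hq0S⟩ : S) 1 + Finsupp.single (⟨q1, hq1S⟩ : S) 1 +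
      Finsupp.single (⟨q2, hq2S⟩ : S) 1).sum
      fun s k => k • (s : Fin (2*n) → ℕ)) = t1 + t2 := by
    rw [Finsupp.sum_add_index' (h := fun (s : S) (k : ℕ) => k • (s : Fin (2*n) → ℕ)) (fun s => zero_smul ℕ _) (fun s k1 k2 => add_smul k1 k2 _),
      Finsupp.sum_add_index' (h := fun (s : S) (k : ℕ) => k • (s : Fin (2*n) → ℕ)) (fun s => zero_smul ℕ _) (fun s k1 k2 => add_smul k1 k2 _),
      Finsupp.sum_single_index (h := fun (s : S) (k : ℕ) => k • (s : Fin (2*n) → ℕ)) (zero_smul ℕ _), Finsupp.sum_single_index (h := fun (s : S) (k : ℕ) => k • (s : Fin (2*n) → ℕ)) (zero_smul ℕ _),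
      Finsupp.sum_single_index (h := fun (s : S) (k : ℕ) => k • (s : Fin (2*n) → ℕ)) (zero_smul ℕ _), one_smul, one_smul, one_smul]
    show q0 + q1 + q2 = t1 + t2
    rw [ht1def, ht2def, hq0def, hq1def, hq2def]
    abel
  have heq := (huq _ hrA).trans (huq _ hrB).symm
  have hne1 : (⟨t1, ht1S⟩ : S) ≠ ⟨q0, hq0S⟩ := by
    intro h
    have := congrArg (fun z : S => sigHom (2*n) (z : Fin (2*n) → ℕ)) h
    simp only at this
    omega
  have hne2 : (⟨t2, ht2S⟩ : S) ≠ ⟨q0, hq0S⟩ := by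
    intro h
    have := congrArg (fun z : S => sigHom (2*n) (z : Fin (2*n) → ℕ)) h
    simp only at this
    omega
  have happ := DFunLike.congr_fun heq (⟨q0, hq0S⟩ : S)
  simp only [Finsupp.add_apply, Finsupp.single_apply] at happ
  rw [if_neg hne1, if_neg hne2, if_pos trivial] at happ
  split_ifs at happ <;> omega
end

section
/- Let r ≥ 1, s ≥ 0, F the free commutative monoid on g_0, g_1, …, g_r, h_1, …, h_s, and Γ_0 ⊆ F the submonoid generated by g_0+g_1, g_2, …, g_r. Call x ∈ F bottom if x cannot be written as y + σ with y ∈ F and σ ∈ Γ_0 nonzero. Then every x ∈ F admits a decomposition x = b + σ with b bottom and σ ∈ Γ_0, and this decomposition is unique. -/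
/-- The free commutative monoid on generators `g_0, …, g_r, h_1, …, h_s`. -/
abbrev FreeMon (r s : ℕ) := (Fin (r + 1) → ℕ) × (Fin s → ℕ)

/-- The generator `g_i`. -/
def gGen (r s : ℕ) (i : Fin (r + 1)) : FreeMon r s := (Pi.single i 1, 0)

/-- The submonoid `Γ₀` generated by `g_0 + g_1, g_2, …, g_r`. -/
def Gamma0 (r s : ℕ) : AddSubmonoid (FreeMon r s) :=
  AddSubmonoid.closure
    ({gGen r s 0 + gGen r s 1} ∪ {x | ∃ i : Fin (r + 1), 2 ≤ (i : ℕ) ∧ x = gGen r s i})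

/-- `x` is a bottom element: it is not of the form `y + σ` with `σ ∈ Γ₀` nonzero. -/
def IsBottom (r s : ℕ) (x : FreeMon r s) : Prop :=
  ¬ ∃ σ ∈ Gamma0 r s, σ ≠ 0 ∧ ∃ y : FreeMon r s, x = y + σ

lemma fin_val_one (r : ℕ) (hr : 1 ≤ r) : ((1 : Fin (r + 1)) : ℕ) = 1 := by
  rw [Fin.val_one']
  exact Nat.mod_eq_of_lt (by omega)

lemma fin_case (r : ℕ) (hr : 1 ≤ r) (j : Fin (r + 1)) :
    j = 0 ∨ j = 1 ∨ 2 ≤ (j : ℕ) := by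
  rcases Nat.lt_or_ge (j : ℕ) 2 with h | h
  · interval_cases hj : (j : ℕ)
    · left; exact Fin.ext (by simp [hj])
    · right; left; exact Fin.ext (by rw [hj, fin_val_one r hr])
  · right; right; exact h

set_option maxHeartbeats 1000000 in
lemma mem_Gamma0_iff (r s : ℕ) (hr : 1 ≤ r) (σ : FreeMon r s) :
    σ ∈ Gamma0 r s ↔ σ.2 = 0 ∧ σ.1 0 = σ.1 1 := by
  have h1 : ((1 : Fin (r + 1)) : ℕ) = 1 := fin_val_one r hr
  have h01 : (0 : Fin (r + 1)) ≠ 1 := by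
    intro h
    have h' := congrArg Fin.val h
    rw [h1, Fin.val_zero] at h'
    omega
  constructor
  · intro hσ
    induction hσ using AddSubmonoid.closure_induction with
    | mem x hx =>
      rcases hx with hx | ⟨i, hi2, rfl⟩
      · simp only [Set.mem_singleton_iff] at hx
        subst hx
        refine ⟨rfl, ?_⟩
        simp [gGen, Pi.single_apply, h01, h01.symm]
      · have hi0 : i ≠ 0 := by
          intro h; subst h; simp at hi2
        have hi1 : i ≠ 1 := by
          intro h; subst h; rw [h1] at hi2; omega
        refine ⟨rfl, ?_⟩
        simp [gGen, Pi.single_apply, hi0, hi1]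
    | zero => exact ⟨rfl, rfl⟩
    | add a b ha hb iha ihb =>
      exact ⟨by simp [iha.1, ihb.1], by simp [iha.2, ihb.2]⟩
  · rintro ⟨h2, heq⟩
    have hmod : 1 % (r + 1) = 1 := Nat.mod_eq_of_lt (by omega)
    have hval : ∀ (i : Fin (r + 1)) (n : ℕ) (j : Fin (r + 1)),
        (∑ _k ∈ Finset.range n, gGen r s i).1 j = n * (if j = i then 1 else 0) := by
      intro i n j
      rw [Prod.fst_sum, Finset.sum_apply, Finset.sum_const, Finset.card_range,
        smul_eq_mul]
      simp [gGen, Pi.single_apply]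
    have hval2 : ∀ (n : ℕ) (j : Fin (r + 1)),
        (∑ _k ∈ Finset.range n, (gGen r s 0 + gGen r s 1)).1 j
        = n * ((if j = (0 : Fin (r + 1)) then 1 else 0) +
            (if j = (1 : Fin (r + 1)) then 1 else 0)) := by
      intro n j
      rw [Prod.fst_sum, Finset.sum_apply, Finset.sum_const, Finset.card_range,
        smul_eq_mul]
      simp [gGen, Pi.single_apply]
    have key : σ = (∑ _k ∈ Finset.range (σ.1 0), (gGen r s 0 + gGen r s 1)) +
        ∑ i ∈ Finset.univ.filter (fun i : Fin (r + 1) => 2 ≤ (i : ℕ)),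
          ∑ _k ∈ Finset.range (σ.1 i), gGen r s i := by
      refine Prod.ext ?_ ?_
      · funext j
        rw [Prod.fst_add, Pi.add_apply, hval2, Prod.fst_sum, Finset.sum_apply,
          Finset.sum_congr rfl fun i _ => hval i (σ.1 i) j]
        simp only [mul_ite, mul_one, mul_zero, Finset.sum_ite_eq,
          Finset.mem_filter, Finset.mem_univ, true_and]
        rcases fin_case r hr j with rfl | rfl | hj
        · have hn : ¬ 2 ≤ ((0 : Fin (r + 1)) : ℕ) := by simp
          simp [h01, h01.symm, hn]
        · have hn : ¬ 2 ≤ ((1 : Fin (r + 1)) : ℕ) := by rw [h1]; omega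
          simp [h01, h01.symm, hn, hmod, heq]
        · have hj0 : j ≠ 0 := by intro h; subst h; simp at hj
          have hj1 : j ≠ 1 := by intro h; subst h; rw [h1] at hj; omega
          simp [hj0, hj1, hj]
      · rw [Prod.snd_add, Prod.snd_sum]
        simp [Prod.snd_sum, gGen, h2]
    rw [key]
    refine AddSubmonoid.add_mem _ ?_ ?_
    · refine AddSubmonoid.sum_mem _ fun k _ => ?_
      exact AddSubmonoid.subset_closure (Set.mem_union_left _ rfl)
    · refine AddSubmonoid.sum_mem _ fun i hi => ?_
      rw [Finset.mem_filter] at hi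
      refine AddSubmonoid.sum_mem _ fun k _ => ?_
      exact AddSubmonoid.subset_closure (Set.mem_union_right _ ⟨i, hi.2, rfl⟩)

lemma isBottom_iff (r s : ℕ) (hr : 1 ≤ r) (b : FreeMon r s) :
    IsBottom r s b ↔ (b.1 0 = 0 ∨ b.1 1 = 0) ∧ ∀ j : Fin (r + 1), 2 ≤ (j : ℕ) → b.1 j = 0 := by
  have h1 : ((1 : Fin (r + 1)) : ℕ) = 1 := fin_val_one r hr
  have h01 : (0 : Fin (r + 1)) ≠ 1 := by
    intro h
    have h' := congrArg Fin.val h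
    rw [h1, Fin.val_zero] at h'
    omega
  constructor
  · intro hb
    by_contra hc
    push_neg at hc
    apply hb
    by_cases hmin : b.1 0 = 0 ∨ b.1 1 = 0
    · obtain ⟨j, hj2, hjne⟩ := hc hmin
      refine ⟨gGen r s j, AddSubmonoid.subset_closure (Or.inr ⟨j, hj2, rfl⟩), ?_,
        (fun i => b.1 i - (gGen r s j).1 i, b.2), ?_⟩
      · intro h
        have := congrArg (fun z => z.1 j) h
        simp [gGen, Pi.single_apply] at this
      · refine Prod.ext ?_ (by simp [gGen])
        funext i
        have hle : (gGen r s j).1 i ≤ b.1 i := by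
          simp only [gGen, Pi.single_apply]
          split
          · next h => subst h; omega
          · omega
        simp only [Prod.fst_add, Pi.add_apply]
        omega
    · push_neg at hmin
      refine ⟨gGen r s 0 + gGen r s 1, AddSubmonoid.subset_closure (Or.inl rfl), ?_,
        (fun i => b.1 i - (gGen r s 0 + gGen r s 1).1 i, b.2), ?_⟩
      · intro h
        have := congrArg (fun z => z.1 0) h
        simp [gGen, Pi.single_apply, h01, h01.symm] at this
      · refine Prod.ext ?_ (by simp [gGen])
        funext i
        have hle : (gGen r s 0).1 i + (gGen r s 1).1 i ≤ b.1 i := by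
          simp only [gGen, Pi.single_apply]
          rcases fin_case r hr i with rfl | rfl | hi
          · simp [h01, h01.symm]; omega
          · simp [h01, h01.symm]; omega
          · have hi0 : i ≠ 0 := by intro h; subst h; simp at hi
            have hi1 : i ≠ 1 := by intro h; subst h; rw [h1] at hi; omega
            simp [hi0, hi1]
        simp only [Prod.fst_add, Pi.add_apply]
        omega
  · rintro ⟨hmin, hhi⟩ ⟨σ, hσΓ, hσne, y, hxy⟩
    obtain ⟨hσ2, hσ01⟩ := (mem_Gamma0_iff r s hr σ).mp hσΓ
    apply hσne
    have hco : ∀ i, b.1 i = y.1 i + σ.1 i := fun i => by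
      have := congrArg (fun z => z.1 i) hxy; simpa using this
    have hc0 : σ.1 0 = 0 := by
      have e0 := hco 0; have e1 := hco 1
      rcases hmin with h | h <;> omega
    refine Prod.ext ?_ hσ2
    funext j
    rcases fin_case r hr j with rfl | rfl | hj
    · exact hc0
    · rw [← hσ01]; exact hc0
    · have e := hco j
      have e' := hhi j hj
      show σ.1 j = 0
      omega

/-- Every element of the free monoid decomposes uniquely as `b + σ` with `b`
bottom and `σ ∈ Γ₀`. -/
theorem stmt_2 (r s : ℕ) (hr : 1 ≤ r) (x : FreeMon r s) :
    ∃! p : FreeMon r s × FreeMon r s,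
      IsBottom r s p.1 ∧ p.2 ∈ Gamma0 r s ∧ x = p.1 + p.2 := by
  have h1 : ((1 : Fin (r + 1)) : ℕ) = 1 := fin_val_one r hr
  have h01 : (0 : Fin (r + 1)) ≠ 1 := by
    intro h
    have h' := congrArg Fin.val h
    rw [h1, Fin.val_zero] at h'
    omega
  have h2of : ∀ j : Fin (r + 1), ¬(j = 0 ∨ j = 1) → 2 ≤ (j : ℕ) := by
    intro j hj
    rcases fin_case r hr j with rfl | rfl | h
    · exact absurd (Or.inl rfl) hj
    · exact absurd (Or.inr rfl) hj
    · exact h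
  have hof2 : ∀ j : Fin (r + 1), 2 ≤ (j : ℕ) → ¬(j = 0 ∨ j = 1) := by
    rintro j hj (rfl | rfl)
    · simp at hj
    · rw [h1] at hj; omega
  set m := min (x.1 0) (x.1 1) with hm
  clear_value m
  refine ⟨⟨(((fun j => if j = 0 ∨ j = 1 then x.1 j - m else 0) : Fin (r + 1) → ℕ), x.2),
          (((fun j => if j = 0 ∨ j = 1 then m else x.1 j) : Fin (r + 1) → ℕ), 0)⟩,
    ⟨?_, ?_, ?_⟩, ?_⟩
  · rw [isBottom_iff r s hr]
    constructor
    · show (if (0 : Fin (r+1)) = 0 ∨ (0 : Fin (r+1)) = 1 then x.1 0 - m else 0) = 0 ∨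
          (if (1 : Fin (r+1)) = 0 ∨ (1 : Fin (r+1)) = 1 then x.1 1 - m else 0) = 0
      rw [if_pos (Or.inl rfl), if_pos (Or.inr rfl)]
      omega
    · intro j hj
      show (if j = 0 ∨ j = 1 then x.1 j - m else 0) = 0
      rw [if_neg (hof2 j hj)]
  · rw [mem_Gamma0_iff r s hr]
    refine ⟨rfl, ?_⟩
    show (if (0 : Fin (r+1)) = 0 ∨ (0 : Fin (r+1)) = 1 then m else x.1 0) =
        (if (1 : Fin (r+1)) = 0 ∨ (1 : Fin (r+1)) = 1 then m else x.1 1)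
    rw [if_pos (Or.inl rfl), if_pos (Or.inr rfl)]
  · refine Prod.ext ?_ (by show x.2 = x.2 + 0; rw [add_zero])
    funext j
    show x.1 j = (if j = 0 ∨ j = 1 then x.1 j - m else 0) +
        (if j = 0 ∨ j = 1 then m else x.1 j)
    by_cases hj : j = 0 ∨ j = 1
    · rw [if_pos hj, if_pos hj]
      have hle : m ≤ x.1 j := by
        rcases hj with rfl | rfl <;> omega
      omega
    · rw [if_neg hj, if_neg hj, zero_add]
  · rintro ⟨b', σ'⟩ ⟨hb', hσ', hx'⟩
    dsimp only at hb' hσ' hx'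
    obtain ⟨hσ2, hσ01⟩ := (mem_Gamma0_iff r s hr σ').mp hσ'
    rw [isBottom_iff r s hr] at hb'
    obtain ⟨hbmin, hbhi⟩ := hb'
    have hco : ∀ i, x.1 i = b'.1 i + σ'.1 i := fun i => by
      have := congrArg (fun z => z.1 i) hx'; simpa using this
    have hc : σ'.1 0 = m := by
      have e0 := hco 0
      have e1 := hco 1
      rcases hbmin with h | h <;> omega
    have hσeq : σ' = (((fun j => if j = 0 ∨ j = 1 then m else x.1 j) : Fin (r + 1) → ℕ), 0) := by
      refine Prod.ext ?_ hσ2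
      funext j
      show σ'.1 j = if j = 0 ∨ j = 1 then m else x.1 j
      by_cases hj : j = 0 ∨ j = 1
      · rw [if_pos hj]
        rcases hj with rfl | rfl
        · exact hc
        · rw [← hσ01]; exact hc
      · rw [if_neg hj]
        have e := hco j
        have hb0 : b'.1 j = 0 := hbhi j (h2of j hj)
        omega
    have hbeq : b' = (((fun j => if j = 0 ∨ j = 1 then x.1 j - m else 0) : Fin (r + 1) → ℕ), x.2) := by
      refine Prod.ext ?_ ?_
      · funext j
        show b'.1 j = if j = 0 ∨ j = 1 then x.1 j - m else 0
        have e := hco j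
        by_cases hj : j = 0 ∨ j = 1
        · rw [if_pos hj]
          have hσj : σ'.1 j = m := by
            rcases hj with rfl | rfl
            · exact hc
            · rw [← hσ01]; exact hc
          omega
        · rw [if_neg hj]
          exact hbhi j (h2of j hj)
      · show b'.2 = x.2
        have := congrArg Prod.snd hx'
        simp only [Prod.snd_add] at this
        rw [hσ2, add_zero] at this
        exact this.symm
    exact Prod.ext hbeq hσeq
end

section
/- Let r ≥ 1, s ≥ 0, and let A be the free abelian group on g_0, g_1, …, g_r, h_1, …, h_s. Suppose x = a_0 g_0 + a_1 g_1 + Σ_j b_j h_j and x′ = a_0′ g_0 + a_1′ g_1 + Σ_j b_j′ h_j with all coefficients in ℕ, min(a_0, a_1) = 0 and min(a_0′, a_1′) = 0. If x − x′ lies in the ℤ-span of {g_0+g_1, g_2, …, g_r}, then x = x′. -/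
/-- The free abelian group on generators `g_0, …, g_r, h_1, …, h_s`. -/
abbrev FreeAb (r s : ℕ) := (Fin (r + 1) → ℤ) × (Fin s → ℤ)

/-- The generator `g_i`. -/
def gGenZ (r s : ℕ) (i : Fin (r + 1)) : FreeAb r s := (Pi.single i 1, 0)

/-- The generator `h_j`. -/
def hGenZ (r s : ℕ) (j : Fin s) : FreeAb r s := (0, Pi.single j 1)

/-- Two "bottom" elements supported on `g_0, g_1` and the `h_j`'s whose
difference lies in the ℤ-span of `{g_0+g_1, g_2, …, g_r}` must coincide. -/
theorem stmt_3 (r s : ℕ) (hr : 1 ≤ r)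
    (a₀ a₁ a₀' a₁' : ℕ) (b b' : Fin s → ℕ)
    (hmin : min a₀ a₁ = 0) (hmin' : min a₀' a₁' = 0)
    (x x' : FreeAb r s)
    (hx : x = a₀ • gGenZ r s 0 + a₁ • gGenZ r s 1 + ∑ j, b j • hGenZ r s j)
    (hx' : x' = a₀' • gGenZ r s 0 + a₁' • gGenZ r s 1 + ∑ j, b' j • hGenZ r s j)
    (hdiff : x - x' ∈ AddSubgroup.closure
      ({gGenZ r s 0 + gGenZ r s 1} ∪
        {z | ∃ i : Fin (r + 1), 2 ≤ (i : ℕ) ∧ z = gGenZ r s i})) :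
    x = x' := by
  classical
  have hval1 : ((1 : Fin (r + 1)) : ℕ) = 1 := by
    simp [Fin.val_one', Nat.mod_eq_of_lt (by omega : 1 < r + 1)]
  have hne01 : (0 : Fin (r + 1)) ≠ 1 := by
    intro h
    have h2 := congrArg Fin.val h
    rw [hval1] at h2
    simp at h2
  -- evaluation homomorphisms
  let e : Fin (r + 1) → (FreeAb r s →+ ℤ) := fun i =>
    (Pi.evalAddMonoidHom (fun _ => ℤ) i).comp (AddMonoidHom.fst _ _)
  let eh : Fin s → (FreeAb r s →+ ℤ) := fun j =>
    (Pi.evalAddMonoidHom (fun _ => ℤ) j).comp (AddMonoidHom.snd _ _)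
  have heg : ∀ i i', e i (gGenZ r s i') = (Pi.single i' 1 : Fin (r+1) → ℤ) i := fun i i' => rfl
  have heh : ∀ i j, e i (hGenZ r s j) = 0 := fun i j => rfl
  have hhg : ∀ j i, eh j (gGenZ r s i) = 0 := fun j i => rfl
  have hhh : ∀ j j', eh j (hGenZ r s j') = (Pi.single j' 1 : Fin s → ℤ) j := fun j j' => rfl
  have mem : ∀ f : FreeAb r s →+ ℤ, f (gGenZ r s 0 + gGenZ r s 1) = 0 →
      (∀ i : Fin (r + 1), 2 ≤ (i : ℕ) → f (gGenZ r s i) = 0) → f (x - x') = 0 := by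
    intro f h1 h2
    have hsub : ({gGenZ r s 0 + gGenZ r s 1} ∪
        {z | ∃ i : Fin (r + 1), 2 ≤ (i : ℕ) ∧ z = gGenZ r s i} : Set (FreeAb r s))
        ⊆ (f.ker : Set (FreeAb r s)) := by
      rintro z (rfl | ⟨i, hi, rfl⟩)
      · exact h1
      · exact h2 i hi
    exact ((AddSubgroup.closure_le _).2 hsub) hdiff
  -- the functional g₀ - g₁
  have key : (e 0 - e 1) (x - x') = 0 := by
    apply mem
    · simp [heg, Pi.single_eq_of_ne hne01, Pi.single_eq_of_ne hne01.symm]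
    · intro i hi
      have hi0 : i ≠ 0 := by intro h; subst h; simp at hi
      have hi1 : i ≠ 1 := by intro h; subst h; omega
      simp [heg, Pi.single_eq_of_ne hi0.symm, Pi.single_eq_of_ne hi1.symm]
  have keyh : ∀ j, eh j (x - x') = 0 := by
    intro j
    apply mem
    · simp [hhg]
    · intro i _; exact hhg j i
  -- compute the evaluations
  have ex0 : e 0 x = (a₀ : ℤ) := by
    rw [hx]
    simp only [map_add, map_nsmul, map_sum, heg, heh]
    simp [Pi.single_eq_of_ne hne01]
  have ex1 : e 1 x = (a₁ : ℤ) := by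
    rw [hx]
    simp only [map_add, map_nsmul, map_sum, heg, heh]
    simp [Pi.single_eq_of_ne hne01.symm]
  have ex0' : e 0 x' = (a₀' : ℤ) := by
    rw [hx']
    simp only [map_add, map_nsmul, map_sum, heg, heh]
    simp [Pi.single_eq_of_ne hne01]
  have ex1' : e 1 x' = (a₁' : ℤ) := by
    rw [hx']
    simp only [map_add, map_nsmul, map_sum, heg, heh]
    simp [Pi.single_eq_of_ne hne01.symm]
  have exh : ∀ j, eh j x = (b j : ℤ) := by
    intro j; rw [hx]
    simp only [map_add, map_nsmul, map_sum, hhg, hhh]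
    simp [Finset.sum_eq_single j, Pi.single_apply]
  have exh' : ∀ j, eh j x' = (b' j : ℤ) := by
    intro j; rw [hx']
    simp only [map_add, map_nsmul, map_sum, hhg, hhh]
    simp [Finset.sum_eq_single j, Pi.single_apply]
  have hab : (a₀ : ℤ) - a₁ - ((a₀' : ℤ) - a₁') = 0 := by
    have := key
    simpa [AddMonoidHom.sub_apply, map_sub, ex0, ex1, ex0', ex1'] using this
  have hb : b = b' := by
    funext j
    have := keyh j
    rw [map_sub, exh, exh'] at this
    exact_mod_cast sub_eq_zero.mp this
  have ha0 : a₀ = a₀' := by omega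
  have ha1 : a₁ = a₁' := by omega
  rw [hx, hx', ha0, ha1, hb]
end

section
/- Let Γ ⊆ ℕ² × ℤ be the submonoid generated by the three elements (1,0,0), (1,0,−1), (0,1,−1). Then: (a) an element (x, y, −3) lies in Γ if and only if 0 ≤ y ≤ 3 and x + y ≥ 3; (b) the elements of Γ with last coordinate −3 that cannot be written as (1,0,0) + γ with γ ∈ Γ are exactly the four elements (3,0,−3), (2,1,−3), (1,2,−3), (0,3,−3). -/
def Smon : AddSubmonoid (ℕ × ℕ × ℤ) where
  carrier := {p | ∃ a b c : ℕ, p = (a + b, c, -(b + c : ℤ))}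
  zero_mem' := ⟨0, 0, 0, by simp; rfl⟩
  add_mem' := by
    rintro p q ⟨a, b, c, rfl⟩ ⟨a', b', c', rfl⟩
    exact ⟨a + a', b + b', c + c', by simp [Prod.ext_iff]; constructor <;> ring⟩

lemma genClosure_mem_iff (p : ℕ × ℕ × ℤ) :
    p ∈ AddSubmonoid.closure
      ({(1, 0, 0), (1, 0, -1), (0, 1, -1)} : Set (ℕ × ℕ × ℤ)) ↔
    ∃ a b c : ℕ, p = (a + b, c, -(b + c : ℤ)) := by
  constructor
  · intro hp
    have : AddSubmonoid.closure
        ({(1, 0, 0), (1, 0, -1), (0, 1, -1)} : Set (ℕ × ℕ × ℤ)) ≤ Smon := by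
      rw [AddSubmonoid.closure_le]
      rintro q hq
      simp only [Set.mem_insert_iff, Set.mem_singleton_iff] at hq
      rcases hq with rfl | rfl | rfl
      · exact ⟨1, 0, 0, by simp⟩
      · exact ⟨0, 1, 0, by simp⟩
      · exact ⟨0, 0, 1, by simp⟩
    exact this hp
  · rintro ⟨a, b, c, rfl⟩
    have h1 : ((a, 0, 0) : ℕ × ℕ × ℤ) ∈ AddSubmonoid.closure
        ({(1, 0, 0), (1, 0, -1), (0, 1, -1)} : Set (ℕ × ℕ × ℤ)) := by
      have m : ((1,0,0) : ℕ × ℕ × ℤ) ∈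
          ({(1, 0, 0), (1, 0, -1), (0, 1, -1)} : Set (ℕ × ℕ × ℤ)) := by simp
      have := nsmul_mem (AddSubmonoid.subset_closure m) a
      simpa [Prod.smul_def, smul_eq_mul, nsmul_eq_mul, Prod.ext_iff] using this
    have h2 : ((b, 0, -(b : ℤ)) : ℕ × ℕ × ℤ) ∈ AddSubmonoid.closure
        ({(1, 0, 0), (1, 0, -1), (0, 1, -1)} : Set (ℕ × ℕ × ℤ)) := by
      have m : ((1,0,-1) : ℕ × ℕ × ℤ) ∈
          ({(1, 0, 0), (1, 0, -1), (0, 1, -1)} : Set (ℕ × ℕ × ℤ)) := by simp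
      have := nsmul_mem (AddSubmonoid.subset_closure m) b
      simpa [Prod.smul_def, smul_eq_mul, nsmul_eq_mul, Prod.ext_iff] using this
    have h3 : ((0, c, -(c : ℤ)) : ℕ × ℕ × ℤ) ∈ AddSubmonoid.closure
        ({(1, 0, 0), (1, 0, -1), (0, 1, -1)} : Set (ℕ × ℕ × ℤ)) := by
      have m : ((0,1,-1) : ℕ × ℕ × ℤ) ∈
          ({(1, 0, 0), (1, 0, -1), (0, 1, -1)} : Set (ℕ × ℕ × ℤ)) := by simp
      have := nsmul_mem (AddSubmonoid.subset_closure m) c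
      simpa [Prod.smul_def, smul_eq_mul, nsmul_eq_mul, Prod.ext_iff] using this
    have := add_mem (add_mem h1 h2) h3
    convert this using 2 <;> simp [Prod.ext_iff] <;> ring

/-- The extended weight monoid of `G₂/P_{α₁}` for the pair `(G₂, SL(3))`:
(a) describes the `3ϖ₁`-well, (b) its bottom. -/
theorem stmt_4 (Γ : AddSubmonoid (ℕ × ℕ × ℤ))
    (hΓ : Γ = AddSubmonoid.closure
      ({(1, 0, 0), (1, 0, -1), (0, 1, -1)} : Set (ℕ × ℕ × ℤ))) :
    (∀ x y : ℕ, (x, y, (-3 : ℤ)) ∈ Γ ↔ (y ≤ 3 ∧ 3 ≤ x + y)) ∧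
    (∀ x y : ℕ,
      ((x, y, (-3 : ℤ)) ∈ Γ ∧
        ¬ ∃ γ ∈ Γ, (x, y, (-3 : ℤ)) = ((1 : ℕ), (0 : ℕ), (0 : ℤ)) + γ) ↔
      ((x, y) = (3, 0) ∨ (x, y) = (2, 1) ∨ (x, y) = (1, 2) ∨ (x, y) = (0, 3))) := by
  subst hΓ
  have key : ∀ x y : ℕ, (x, y, (-3 : ℤ)) ∈ AddSubmonoid.closure
      ({(1, 0, 0), (1, 0, -1), (0, 1, -1)} : Set (ℕ × ℕ × ℤ)) ↔
      (y ≤ 3 ∧ 3 ≤ x + y) := by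
    intro x y
    rw [genClosure_mem_iff]
    constructor
    · rintro ⟨a, b, c, h⟩
      simp only [Prod.ext_iff] at h
      obtain ⟨h1, h2, h3⟩ := h
      omega
    · rintro ⟨hy, hxy⟩
      exact ⟨x + y - 3, 3 - y, y, by simp [Prod.ext_iff]; omega⟩
  refine ⟨key, fun x y => ?_⟩
  constructor
  · rintro ⟨hmem, hne⟩
    rw [key] at hmem
    by_cases hx : 1 ≤ x ∧ y ≤ 3 ∧ 3 ≤ (x - 1) + y
    · exfalso
      apply hne
      refine ⟨(x - 1, y, -3), (key _ _).2 ⟨hx.2.1, hx.2.2⟩, ?_⟩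
      simp [Prod.ext_iff]; omega
    · simp only [Prod.mk.injEq]
      omega
  · intro h
    have hmem : (x, y, (-3 : ℤ)) ∈ AddSubmonoid.closure
        ({(1, 0, 0), (1, 0, -1), (0, 1, -1)} : Set (ℕ × ℕ × ℤ)) := by
      rw [key]
      rcases h with h | h | h | h <;> simp [Prod.ext_iff] at h <;> omega
    refine ⟨hmem, ?_⟩
    rintro ⟨γ, hγ, heq⟩
    rcases γ with ⟨a, b, c⟩
    simp only [Prod.mk_add_mk, Prod.mk.injEq] at heq
    obtain ⟨hx1, hy1, hz1⟩ := heq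
    have hc : c = -3 := by omega
    subst hc
    rw [key] at hγ
    rcases h with h | h | h | h <;> simp only [Prod.mk.injEq] at h <;> omega
end
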